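/- Let y⋆ > 0, let w, V : (0,y⋆) → ℝ be continuous with w(y) > 0 for all y ∈ (0,y⋆), and let λ ∈ ℝ with λ > 1. Suppose v₁ : (0,y⋆) → ℝ is twice continuously differentiable with v₁(y) > 0 and −v₁'' + V v₁ = 0 on (0,y⋆), and v : (0,y⋆) → ℂ is twice continuously differentiable with −v'' + V v = −((1−λ)²/w²)·v on (0,y⋆). Set q := v/v₁ and assume ∫₀^{y⋆} v₁(y)²|q'(y)|² dy < ∞, ∫₀^{y⋆} |v(y)|²/w(y)² dy < ∞, and v₁(y)² q'(y)·conj(q(y)) → 0 as y → 0⁺ and as y → y⋆⁻. Then v ≡ 0 on (0,y⋆). -/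

import Mathlib

open MeasureTheory

/-- Quotient (reduction-of-order) argument excluding real eigenvalues `λ > 1`. -/
theorem quotient_exclusion
    (ystar : ℝ) (hystar : 0 < ystar)
    (w V : ℝ → ℝ)
    (hw_cont : ContinuousOn w (Set.Ioo 0 ystar))
    (hV_cont : ContinuousOn V (Set.Ioo 0 ystar))
    (hw_pos : ∀ y ∈ Set.Ioo (0:ℝ) ystar, 0 < w y)
    (lam : ℝ) (hlam : 1 < lam)
    (v₁ : ℝ → ℝ) (v q : ℝ → ℂ)
    (hv₁_C2 : ContDiffOn ℝ 2 v₁ (Set.Ioo 0 ystar))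
    (hv₁_pos : ∀ y ∈ Set.Ioo (0:ℝ) ystar, 0 < v₁ y)
    (hv₁ODE : ∀ y ∈ Set.Ioo (0:ℝ) ystar, -deriv (deriv v₁) y + V y * v₁ y = 0)
    (hv_C2 : ContDiffOn ℝ 2 v (Set.Ioo 0 ystar))
    (hvODE : ∀ y ∈ Set.Ioo (0:ℝ) ystar,
      -deriv (deriv v) y + (V y : ℂ) * v y
        = -((((1 - lam) ^ 2 / (w y) ^ 2 : ℝ)) : ℂ) * v y)
    (hq : ∀ y ∈ Set.Ioo (0:ℝ) ystar, q y = v y / (v₁ y : ℂ))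
    (hI1 : IntegrableOn (fun y => (v₁ y) ^ 2 * ‖deriv q y‖ ^ 2) (Set.Ioo 0 ystar))
    (hI2 : IntegrableOn (fun y => ‖v y‖ ^ 2 / (w y) ^ 2) (Set.Ioo 0 ystar))
    (hb0 : Filter.Tendsto
      (fun y => (((v₁ y) ^ 2 : ℝ) : ℂ) * deriv q y * (starRingEnd ℂ) (q y))
      (nhdsWithin 0 (Set.Ioo 0 ystar)) (nhds 0))
    (hb1 : Filter.Tendsto
      (fun y => (((v₁ y) ^ 2 : ℝ) : ℂ) * deriv q y * (starRingEnd ℂ) (q y))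
      (nhdsWithin ystar (Set.Ioo 0 ystar)) (nhds 0)) :
    ∀ y ∈ Set.Ioo (0:ℝ) ystar, v y = 0 := by
  have hSopen : IsOpen (Set.Ioo (0:ℝ) ystar) := isOpen_Ioo
  set Wf : ℝ → ℂ := fun x => (v₁ x : ℂ) * deriv v x - v x * ((deriv v₁ x : ℝ) : ℂ)
    with hWdef
  set F : ℝ → ℂ := fun y => (((v₁ y) ^ 2 : ℝ) : ℂ) * deriv q y * (starRingEnd ℂ) (q y)
    with hFdef
  set G : ℝ → ℂ := fun y => Wf y * (starRingEnd ℂ) (v y) / ((v₁ y : ℝ) : ℂ) with hGdef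
  set D : ℝ → ℝ :=
    fun x => (1 - lam) ^ 2 / (w x) ^ 2 * ‖v x‖ ^ 2 + ‖Wf x‖ ^ 2 / (v₁ x) ^ 2 with hDdef
  set g : ℝ → ℝ := fun y => (F y).re with hgdef
  -- differentiability facts
  have hdvS : DifferentiableOn ℝ v (Set.Ioo 0 ystar) :=
    hv_C2.differentiableOn (by norm_num)
  have hddvS : DifferentiableOn ℝ (deriv v) (Set.Ioo 0 ystar) :=
    (hv_C2.deriv_of_isOpen (m := 1) hSopen (by norm_num)).differentiableOn (by norm_num)
  have hdv₁S : DifferentiableOn ℝ v₁ (Set.Ioo 0 ystar) :=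
    hv₁_C2.differentiableOn (by norm_num)
  have hddv₁S : DifferentiableOn ℝ (deriv v₁) (Set.Ioo 0 ystar) :=
    (hv₁_C2.deriv_of_isOpen (m := 1) hSopen (by norm_num)).differentiableOn (by norm_num)
  -- main per-point computation
  have main : ∀ x ∈ Set.Ioo (0:ℝ) ystar,
      deriv q x = Wf x / ((v₁ x : ℂ)) ^ 2 ∧ HasDerivAt G (((D x : ℝ)) : ℂ) x := by
    intro x hx
    have hxm : Set.Ioo (0:ℝ) ystar ∈ nhds x := hSopen.mem_nhds hx
    have hv₁x : (0:ℝ) < v₁ x := hv₁_pos x hx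
    have hne : ((v₁ x : ℂ)) ≠ 0 := by exact_mod_cast hv₁x.ne'
    have hd1 : HasDerivAt v₁ (deriv v₁ x) x := (hdv₁S.differentiableAt hxm).hasDerivAt
    have hd1' : HasDerivAt (deriv v₁) (deriv (deriv v₁) x) x :=
      (hddv₁S.differentiableAt hxm).hasDerivAt
    have hd2 : HasDerivAt v (deriv v x) x := (hdvS.differentiableAt hxm).hasDerivAt
    have hd2' : HasDerivAt (deriv v) (deriv (deriv v) x) x :=
      (hddvS.differentiableAt hxm).hasDerivAt
    have hc1 : HasDerivAt (fun y => ((v₁ y : ℝ) : ℂ)) (((deriv v₁ x : ℝ)) : ℂ) x :=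
      hd1.ofReal_comp
    have hc1' : HasDerivAt (fun y => ((deriv v₁ y : ℝ) : ℂ))
        (((deriv (deriv v₁) x : ℝ)) : ℂ) x := hd1'.ofReal_comp
    -- ODE rewrites
    have hode1 : ((deriv (deriv v₁) x : ℝ) : ℂ) = (V x : ℂ) * ((v₁ x : ℝ) : ℂ) := by
      have h := hv₁ODE x hx
      have : deriv (deriv v₁) x = V x * v₁ x := by linarith
      rw [this]; push_cast; ring
    have hode2 : deriv (deriv v) x
        = (V x : ℂ) * v x + ((((1 - lam) ^ 2 / (w x) ^ 2 : ℝ)) : ℂ) * v x := by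
      have h := hvODE x hx
      linear_combination -h
    -- derivative of Wf
    have hW : HasDerivAt Wf
        (((((1 - lam) ^ 2 / (w x) ^ 2 : ℝ)) : ℂ) * ((v₁ x : ℝ) : ℂ) * v x) x := by
      have h := (hc1.mul hd2').sub (hd2.mul hc1')
      refine h.congr_deriv ?_
      rw [hode2, hode1]; ring
    -- derivative of q
    have hqd : HasDerivAt q
        ((deriv v x * ((v₁ x : ℝ) : ℂ) - v x * ((deriv v₁ x : ℝ) : ℂ))
          / ((v₁ x : ℝ) : ℂ) ^ 2) x := by
      have h := hd2.div hc1 hne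
      exact h.congr_of_eventuallyEq
        (Filter.eventuallyEq_of_mem hxm (fun y hy => hq y hy))
    have hqderiv : deriv q x = Wf x / ((v₁ x : ℂ)) ^ 2 := by
      rw [hqd.deriv, hWdef]; congr 1; ring
    -- derivative of conj ∘ v
    have hconj : HasDerivAt (fun y => (starRingEnd ℂ) (v y))
        ((starRingEnd ℂ) (deriv v x)) x := by
      have h := (Complex.conjCLE.toContinuousLinearMap.hasFDerivAt
        (x := v x)).comp_hasDerivAt x hd2
      simpa [Function.comp_def] using h
    -- derivative of G
    have hGd := (hW.mul hconj).div hc1 hne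
    refine ⟨hqderiv, ?_⟩
    refine hGd.congr_deriv ?_
    have hWc : (starRingEnd ℂ) (Wf x)
        = ((v₁ x : ℝ) : ℂ) * (starRingEnd ℂ) (deriv v x)
          - (starRingEnd ℂ) (v x) * ((deriv v₁ x : ℝ) : ℂ) := by
      rw [hWdef]; simp [map_sub, Complex.conj_ofReal]
    have hm1 := Complex.mul_conj' (Wf x)
    have hm2 := Complex.mul_conj' (v x)
    have hnum : ((((1 - lam) ^ 2 / (w x) ^ 2 : ℝ) : ℂ) * ((v₁ x : ℝ) : ℂ) * v x
          * (starRingEnd ℂ) (v x) + Wf x * (starRingEnd ℂ) (deriv v x))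
          * ((v₁ x : ℝ) : ℂ) - Wf x * (starRingEnd ℂ) (v x) * ((deriv v₁ x : ℝ) : ℂ)
        = (((1 - lam) ^ 2 / (w x) ^ 2 : ℝ) : ℂ) * ((v₁ x : ℝ) : ℂ) ^ 2
            * (v x * (starRingEnd ℂ) (v x)) + Wf x * (starRingEnd ℂ) (Wf x) := by
      rw [hWc]; ring
    rw [Pi.mul_apply, hnum, hm1, hm2, hDdef]
    push_cast
    field_simp
  -- F = G on the interval
  have hFG : Set.EqOn F G (Set.Ioo 0 ystar) := by
    intro z hz
    have hv₁z : (0:ℝ) < v₁ z := hv₁_pos z hz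
    have hne : ((v₁ z : ℂ)) ≠ 0 := by exact_mod_cast hv₁z.ne'
    rw [hFdef, hGdef]
    simp only []
    rw [(main z hz).1, hq z hz, map_div₀, Complex.conj_ofReal]
    push_cast
    field_simp
  -- derivative of g
  have hgd : ∀ x ∈ Set.Ioo (0:ℝ) ystar, HasDerivAt g (D x) x := by
    intro x hx
    have hF' : HasDerivAt F (((D x : ℝ)) : ℂ) x :=
      (main x hx).2.congr_of_eventuallyEq
        (Filter.eventuallyEq_of_mem (hSopen.mem_nhds hx) hFG)
    have h := (Complex.reCLM.hasFDerivAt (x := F x)).comp_hasDerivAt x hF'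
    simpa [Function.comp_def, hgdef] using h
  have hDnonneg : ∀ x ∈ Set.Ioo (0:ℝ) ystar, 0 ≤ D x := by
    intro x hx
    rw [hDdef]
    positivity
  -- monotonicity
  have hmono : MonotoneOn g (Set.Ioo 0 ystar) := by
    apply monotoneOn_of_deriv_nonneg (convex_Ioo 0 ystar)
    · intro x hx; exact ((hgd x hx).continuousAt).continuousWithinAt
    · intro x hx
      rw [interior_Ioo] at hx
      exact ((hgd x hx).differentiableAt).differentiableWithinAt
    · intro x hx
      rw [interior_Ioo] at hx
      rw [(hgd x hx).deriv]
      exact hDnonneg x hx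
  -- limits of g at endpoints
  have tg0 : Filter.Tendsto g (nhdsWithin 0 (Set.Ioo 0 ystar)) (nhds 0) := by
    have h := (Complex.continuous_re.tendsto 0).comp hb0
    simpa [Function.comp_def, hgdef] using h
  have tg1 : Filter.Tendsto g (nhdsWithin ystar (Set.Ioo 0 ystar)) (nhds 0) := by
    have h := (Complex.continuous_re.tendsto 0).comp hb1
    simpa [Function.comp_def, hgdef] using h
  have hc0 : (0:ℝ) ∈ closure (Set.Ioo 0 ystar) := by
    rw [closure_Ioo hystar.ne]; exact ⟨le_rfl, hystar.le⟩
  have hc1 : ystar ∈ closure (Set.Ioo 0 ystar) := by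
    rw [closure_Ioo hystar.ne]; exact ⟨hystar.le, le_rfl⟩
  have hnb0 : (nhdsWithin (0:ℝ) (Set.Ioo 0 ystar)).NeBot :=
    mem_closure_iff_nhdsWithin_neBot.mp hc0
  have hnb1 : (nhdsWithin ystar (Set.Ioo 0 ystar)).NeBot :=
    mem_closure_iff_nhdsWithin_neBot.mp hc1
  have h0le : ∀ z ∈ Set.Ioo (0:ℝ) ystar, 0 ≤ g z := by
    intro z hz
    refine le_of_tendsto tg0 ?_
    have h1 : ∀ᶠ y in nhdsWithin (0:ℝ) (Set.Ioo 0 ystar), y < z :=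
      Filter.Eventually.filter_mono nhdsWithin_le_nhds (Filter.tendsto_id.eventually_lt_const hz.1)
    filter_upwards [self_mem_nhdsWithin, h1] with y hyS hylt
    exact hmono hyS hz hylt.le
  have hle0 : ∀ z ∈ Set.Ioo (0:ℝ) ystar, g z ≤ 0 := by
    intro z hz
    refine ge_of_tendsto tg1 ?_
    have h1 : ∀ᶠ y in nhdsWithin ystar (Set.Ioo 0 ystar), z < y :=
      Filter.Eventually.filter_mono nhdsWithin_le_nhds (Filter.tendsto_id.eventually_const_lt hz.2)
    filter_upwards [self_mem_nhdsWithin, h1] with y hyS hylt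
    exact hmono hz hyS hylt.le
  -- conclude
  intro y hy
  have hg0 : g =ᶠ[nhds y] fun _ => (0:ℝ) :=
    Filter.eventuallyEq_of_mem (hSopen.mem_nhds hy)
      (fun z hz => le_antisymm (hle0 z hz) (h0le z hz))
  have hzero : HasDerivAt g 0 y :=
    (hasDerivAt_const y (0:ℝ)).congr_of_eventuallyEq hg0
  have hD0 : D y = 0 := (hgd y hy).unique hzero
  have hwy : (0:ℝ) < w y := hw_pos y hy
  have hv₁y : (0:ℝ) < v₁ y := hv₁_pos y hy
  have hcpos : 0 < (1 - lam) ^ 2 / (w y) ^ 2 := by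
    apply div_pos
    · have : (1:ℝ) - lam ≠ 0 := by linarith
      positivity
    · positivity
  have hterm2 : 0 ≤ ‖Wf y‖ ^ 2 / (v₁ y) ^ 2 := by positivity
  have hvnorm : ‖v y‖ ^ 2 ≤ 0 := by
    rw [hDdef] at hD0
    nlinarith [sq_nonneg ‖v y‖]
  have : ‖v y‖ = 0 := by nlinarith [norm_nonneg (v y)]
  exact norm_eq_zero.mp this
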